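/- Let τ ∈ (0,1) and suppose the real random variables X and Y have a joint density with respect to Lebesgue measure on ℝ², EX² < ∞, and E|Y| < ∞. Then the function h(a,b) = E[ρ_τ(Y − a − bX)] is convex on ℝ² and h(a,b) → +∞ as a² + b² → ∞. -/

import Mathlib

open MeasureTheory ProbabilityTheory Filter

/-- The check loss `ρ_τ(w) = w (τ - I(w<0))`. -/
noncomputable def rho (τ w : ℝ) : ℝ := w * (τ - if w < 0 then 1 else 0)

private lemma rho_eq_max' (τ w : ℝ) : rho τ w = max (τ * w) ((τ - 1) * w) := by
  rcases lt_trichotomy w 0 with h | h | h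
  · simp only [rho, if_pos h]
    rw [max_eq_right (by nlinarith)]; ring
  · simp [rho, h]
  · simp only [rho, if_neg (not_lt.2 h.le)]
    rw [max_eq_left (by nlinarith)]; ring

private lemma convexOn_rho' (τ : ℝ) : ConvexOn ℝ Set.univ (rho τ) := by
  have h : rho τ = fun w => max (τ * w) ((τ - 1) * w) := funext fun w => rho_eq_max' τ w
  rw [h]
  have l1 : ConvexOn ℝ Set.univ (fun w : ℝ => τ * w) :=
    ⟨convex_univ, fun x _ y _ a b _ _ _ => le_of_eq (by simp [smul_eq_mul]; ring)⟩
  have l2 : ConvexOn ℝ Set.univ (fun w : ℝ => (τ - 1) * w) :=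
    ⟨convex_univ, fun x _ y _ a b _ _ _ => le_of_eq (by simp [smul_eq_mul]; ring)⟩
  exact l1.sup l2

private lemma abs_rho_le' (τ w : ℝ) (hτ : τ ∈ Set.Ioo (0:ℝ) 1) : |rho τ w| ≤ |w| := by
  obtain ⟨h0, h1⟩ := hτ
  rw [rho, abs_mul]
  have h : |τ - if w < 0 then 1 else 0| ≤ 1 := by
    split <;> rw [abs_le] <;> constructor <;> linarith
  calc |w| * |τ - if w < 0 then 1 else 0| ≤ |w| * 1 :=
        mul_le_mul_of_nonneg_left h (abs_nonneg w)
    _ = |w| := mul_one _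

private lemma rho_ge' (τ w : ℝ) (hτ : τ ∈ Set.Ioo (0:ℝ) 1) : min τ (1 - τ) * |w| ≤ rho τ w := by
  obtain ⟨h0, h1⟩ := hτ
  rcases lt_or_ge w 0 with h | h
  · rw [rho, if_pos h, abs_of_neg h]
    have : min τ (1-τ) ≤ 1 - τ := min_le_right _ _
    nlinarith
  · rw [rho, if_neg (not_lt.2 h), abs_of_nonneg h]
    have : min τ (1-τ) ≤ τ := min_le_left _ _
    nlinarith

private lemma measurable_rho' (τ : ℝ) : Measurable (rho τ) := by
  unfold rho
  exact measurable_id.mul ((measurable_const.sub (Measurable.ite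
    (measurableSet_lt measurable_id measurable_const) measurable_const measurable_const)))

private lemma coerc_real' (a b c1 c2 : ℝ) (hb : 0 ≤ b) (h12 : c1 < c2) :
    (c2 - c1) / (c2 - c1 + 2 * max |c1| |c2| + 2) * (|a| + |b|) ≤
      max (max 0 (-(a + b * c1))) (max 0 (a + b * c2)) := by
  set C := max |c1| |c2| with hC
  set d := c2 - c1 with hd
  have hC0 : 0 ≤ C := le_trans (abs_nonneg c1) (le_max_left _ _)
  have hd0 : 0 < d := by simp [hd]; linarith
  set M := max (max 0 (-(a + b * c1))) (max 0 (a + b * c2)) with hM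
  have hM0 : 0 ≤ M := le_trans (le_max_left _ _) (le_max_left _ _)
  have h1 : -(a + b * c1) ≤ M := le_trans (le_max_right _ _) (le_max_left _ _)
  have h2 : a + b * c2 ≤ M := le_trans (le_max_right _ _) (le_max_right _ _)
  have h2M : b * d ≤ 2 * M := by nlinarith
  have hMa : |a| - C * b ≤ M := by
    rcases le_or_gt 0 a with ha | ha
    · rw [abs_of_nonneg ha]
      nlinarith [neg_abs_le c2, le_max_right |c1| |c2|]
    · rw [abs_of_neg ha]
      nlinarith [neg_abs_le c1, le_max_left |c1| |c2|, le_abs_self c1]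
  rw [abs_of_nonneg hb, div_mul_eq_mul_div, div_le_iff₀ (by linarith)]
  nlinarith

private lemma set_lb' {Ω : Type*} [MeasurableSpace Ω] (P : Measure Ω) [IsProbabilityMeasure P]
    (f : Ω → ℝ) (hf : Integrable f P) (S : Set Ω) (hS : MeasurableSet S)
    (r : ℝ) (hb : ∀ ω ∈ S, r ≤ |f ω|) :
    (P S).toReal * r ≤ ∫ ω, |f ω| ∂P := by
  calc (P S).toReal * r = ∫ _ω in S, r ∂P := by rw [setIntegral_const, smul_eq_mul]; rfl
    _ ≤ ∫ ω in S, |f ω| ∂P :=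
        setIntegral_mono_on (integrableOn_const (measure_ne_top P S))
          hf.abs.integrableOn hS hb
    _ ≤ ∫ ω, |f ω| ∂P :=
        setIntegral_le_integral hf.abs (ae_of_all _ fun ω => abs_nonneg _)

open Set in
private lemma exists_sep (μ : Measure ℝ) [IsProbabilityMeasure μ] (hac : μ ≪ (volume : Measure ℝ)) :
    ∃ c1 c2 : ℝ, c1 < c2 ∧ 0 < μ (Set.Iic c1) ∧ 0 < μ (Set.Ici c2) := by
  -- step A: find c with both Iic c and Ioi c positive
  have hex1 : ∃ n : ℕ, 0 < μ (Iic (n : ℝ)) := by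
    by_contra h
    push_neg at h
    have h0 : ∀ n : ℕ, μ (Iic (n : ℝ)) = 0 := fun n => le_antisymm (h n) zero_le
    have : μ (⋃ n : ℕ, Iic (n : ℝ)) = 0 := measure_iUnion_null h0
    rw [show (⋃ n : ℕ, Iic (n : ℝ)) = univ by
      ext x; simp only [mem_iUnion, mem_Iic, mem_univ, iff_true]
      exact ⟨⌈x⌉₊, Nat.le_ceil x⟩] at this
    simp [measure_univ] at this
  have hex2 : ∃ n : ℕ, 0 < μ (Ioi (-(n : ℝ))) := by
    by_contra h
    push_neg at h
    have h0 : ∀ n : ℕ, μ (Ioi (-(n : ℝ))) = 0 := fun n => le_antisymm (h n) zero_le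
    have : μ (⋃ n : ℕ, Ioi (-(n : ℝ))) = 0 := measure_iUnion_null h0
    rw [show (⋃ n : ℕ, Ioi (-(n : ℝ))) = univ by
      ext x; simp only [mem_iUnion, mem_Ioi, mem_univ, iff_true]
      refine ⟨⌈|x|⌉₊ + 1, ?_⟩
      have := Nat.le_ceil |x|
      have := neg_abs_le x
      push_cast
      linarith] at this
    simp [measure_univ] at this
  have hsum : ∀ c : ℝ, μ (Iic c) + μ (Ioi c) = 1 := by
    intro c
    rw [← measure_univ (μ := μ), ← Iic_union_Ioi (a := c)]
    exact (measure_union (Iic_disjoint_Ioi le_rfl) measurableSet_Ioi).symm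
  have key : ∃ c : ℝ, 0 < μ (Iic c) ∧ 0 < μ (Ioi c) := by
    by_contra h
    push_neg at h
    have hdich : ∀ c : ℝ, μ (Iic c) = 0 ∨ μ (Iic c) = 1 := by
      intro c
      rcases eq_or_lt_of_le (show 0 ≤ μ (Iic c) from zero_le) with h0 | h0
      · exact Or.inl h0.symm
      · right
        have := h c h0
        have := hsum c
        simp_all
    obtain ⟨n0, hn0⟩ := hex1
    obtain ⟨n1, hn1⟩ := hex2
    set s : Set ℝ := {c | μ (Iic c) = 0} with hs
    have hsne : s.Nonempty := by
      refine ⟨-(n1 : ℝ), ?_⟩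
      rcases hdich (-(n1 : ℝ)) with h0 | h1
      · exact h0
      · exfalso
        have hle := hsum (-(n1 : ℝ))
        rw [h1] at hle
        have hz : μ (Ioi (-(n1:ℝ))) = 0 :=
          (ENNReal.add_right_inj ENNReal.one_ne_top).mp (hle.trans (add_zero 1).symm)
        exact absurd hz hn1.ne'
    have hbdd : BddAbove s := by
      refine ⟨(n0 : ℝ), fun c hc => ?_⟩
      by_contra hgt
      push_neg at hgt
      have : μ (Iic (n0 : ℝ)) ≤ μ (Iic c) := measure_mono (Iic_subset_Iic.2 hgt.le)
      rw [hc] at this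
      exact absurd (le_antisymm this zero_le) hn0.ne'
    set cs := sSup s with hcs
    have hlow : ∀ c < cs, μ (Iic c) = 0 := by
      intro c hc
      obtain ⟨d, hd, hcd⟩ := exists_lt_of_lt_csSup hsne hc
      exact le_antisymm (le_trans (measure_mono (Iic_subset_Iic.2 hcd.le)) hd.le) zero_le
    have hIio : μ (Iio cs) = 0 := by
      rw [show Iio cs = ⋃ n : ℕ, Iic (cs - 1 / (n + 1)) by
        ext x
        simp only [mem_iUnion, mem_Iic, mem_Iio]
        constructor
        · intro hx
          obtain ⟨n, hn⟩ := exists_nat_one_div_lt (sub_pos.2 hx)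
          exact ⟨n, by push_cast at hn ⊢; linarith⟩
        · rintro ⟨n, hn⟩
          have : (0:ℝ) < 1 / (n + 1) := by positivity
          linarith]
      refine measure_iUnion_null fun n => hlow _ ?_
      have h : (0:ℝ) < 1 / ((n:ℝ) + 1) := by positivity
      linarith
    have hsing : μ {cs} = 0 := hac Real.volume_singleton
    have hIic0 : μ (Iic cs) = 0 := by
      rw [← Iio_union_right]
      exact measure_union_null hIio hsing
    have hone : ∀ n : ℕ, μ (Iic (cs + 1 / (n + 1))) = 1 := by
      intro n
      rcases hdich (cs + 1 / (n + 1)) with h0 | h1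
      · exfalso
        have hmem : (cs + 1 / ((n:ℝ) + 1)) ∈ s := h0
        have := le_csSup hbdd hmem
        have hp : (0:ℝ) < 1 / ((n:ℝ) + 1) := by positivity
        rw [← hcs] at this
        linarith
      · exact h1
    have hinter : (⋂ n : ℕ, Iic (cs + 1 / ((n:ℝ) + 1))) = Iic cs := by
      ext x
      simp only [mem_iInter, mem_Iic]
      constructor
      · intro hx
        by_contra hgt
        push_neg at hgt
        obtain ⟨n, hn⟩ := exists_nat_one_div_lt (sub_pos.2 hgt)
        have := hx n
        push_cast at hn
        linarith
      · intro hx n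
        have : (0:ℝ) < 1 / ((n:ℝ) + 1) := by positivity
        linarith
    have htend : Tendsto (fun n : ℕ => μ (Iic (cs + 1 / ((n:ℝ) + 1)))) atTop
        (nhds (μ (⋂ n : ℕ, Iic (cs + 1 / ((n:ℝ) + 1))))) := by
      apply tendsto_measure_iInter_atTop (fun n => measurableSet_Iic.nullMeasurableSet)
      · intro m n hmn
        apply Iic_subset_Iic.2
        have hmn' : (m:ℝ) ≤ (n:ℝ) := Nat.cast_le.mpr hmn
        have : 1 / ((n:ℝ) + 1) ≤ 1 / ((m:ℝ) + 1) :=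
          one_div_le_one_div_of_le (by positivity) (by linarith)
        linarith
      · exact ⟨0, by simp [measure_ne_top]⟩
    rw [hinter, hIic0] at htend
    have htend' : Tendsto (fun n : ℕ => μ (Iic (cs + 1 / ((n:ℝ) + 1)))) atTop (nhds 1) := by
      simp only [hone]
      exact tendsto_const_nhds
    exact zero_ne_one (tendsto_nhds_unique htend htend')
  obtain ⟨c, hc1, hc2⟩ := key
  have hsep : ∃ n : ℕ, 0 < μ (Ici (c + 1 / (n + 1))) := by
    by_contra h
    push_neg at h
    have h0 : ∀ n : ℕ, μ (Ici (c + 1 / ((n:ℝ) + 1))) = 0 := fun n => le_antisymm (h n) zero_le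
    have : μ (⋃ n : ℕ, Ici (c + 1 / ((n:ℝ) + 1))) = 0 := measure_iUnion_null h0
    rw [show (⋃ n : ℕ, Ici (c + 1 / ((n:ℝ) + 1))) = Ioi c by
      ext x
      simp only [mem_iUnion, mem_Ici, mem_Ioi]
      constructor
      · rintro ⟨n, hn⟩
        have : (0:ℝ) < 1 / ((n:ℝ) + 1) := by positivity
        linarith
      · intro hx
        obtain ⟨n, hn⟩ := exists_nat_one_div_lt (sub_pos.2 hx)
        exact ⟨n, by push_cast at hn ⊢; linarith⟩] at this
    exact absurd this hc2.ne'
  obtain ⟨n, hn⟩ := hsep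
  refine ⟨c, c + 1 / (n + 1), ?_, hc1, hn⟩
  have h : (0:ℝ) < 1 / ((n:ℝ)+1) := by positivity
  linarith

/-- If `(X, Y)` has a joint density, `EX² < ∞` and `E|Y| < ∞`, then
`h(a,b) = E[ρ_τ(Y − a − bX)]` is convex on `ℝ²` and `h(a,b) → ∞` as `a² + b² → ∞`. -/
theorem stmt4 {Ω : Type*} [MeasurableSpace Ω] (P : Measure Ω) [IsProbabilityMeasure P]
    (τ : ℝ) (hτ : τ ∈ Set.Ioo (0 : ℝ) 1)
    (X Y : Ω → ℝ) (hX : Measurable X) (hY : Measurable Y)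
    (hjoint : Measure.map (fun ω => (X ω, Y ω)) P ≪ (volume : Measure (ℝ × ℝ)))
    (hX2 : Integrable (fun ω => (X ω) ^ 2) P) (hY1 : Integrable Y P) :
    ConvexOn ℝ Set.univ (fun p : ℝ × ℝ => ∫ ω, rho τ (Y ω - p.1 - p.2 * X ω) ∂P) ∧
    Tendsto (fun p : ℝ × ℝ => ∫ ω, rho τ (Y ω - p.1 - p.2 * X ω) ∂P)
      (Filter.comap (fun p : ℝ × ℝ => p.1 ^ 2 + p.2 ^ 2) atTop) atTop := by
  obtain ⟨hτ0, hτ1⟩ := hτ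
  -- basic integrability
  have intX : Integrable X P := by
    refine ((integrable_const (1:ℝ)).add hX2).mono' hX.aestronglyMeasurable
      (ae_of_all _ fun ω => ?_)
    simp only [Real.norm_eq_abs, Pi.add_apply]
    nlinarith [sq_nonneg (|X ω| - 1), abs_nonneg (X ω), sq_abs (X ω)]
  have intf : ∀ p : ℝ × ℝ, Integrable (fun ω => Y ω - p.1 - p.2 * X ω) P := fun p =>
    (hY1.sub (integrable_const p.1)).sub (intX.const_mul p.2)
  have measf : ∀ p : ℝ × ℝ, Measurable (fun ω => Y ω - p.1 - p.2 * X ω) := fun p =>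
    (hY.sub measurable_const).sub (measurable_const.mul hX)
  have intrho : ∀ p : ℝ × ℝ, Integrable (fun ω => rho τ (Y ω - p.1 - p.2 * X ω)) P := by
    intro p
    refine (intf p).abs.mono' ((measurable_rho' τ).comp (measf p)).aestronglyMeasurable
      (ae_of_all _ fun ω => ?_)
    simpa using abs_rho_le' τ _ ⟨hτ0, hτ1⟩
  -- convexity
  have hconv : ConvexOn ℝ Set.univ
      (fun p : ℝ × ℝ => ∫ ω, rho τ (Y ω - p.1 - p.2 * X ω) ∂P) := by
    refine ⟨convex_univ, fun p _ q _ a b ha hb hab => ?_⟩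
    have hpt : ∀ ω, rho τ (Y ω - (a • p + b • q).1 - (a • p + b • q).2 * X ω) ≤
        a * rho τ (Y ω - p.1 - p.2 * X ω) + b * rho τ (Y ω - q.1 - q.2 * X ω) := by
      intro ω
      have harg : Y ω - (a • p + b • q).1 - (a • p + b • q).2 * X ω =
          a • (Y ω - p.1 - p.2 * X ω) + b • (Y ω - q.1 - q.2 * X ω) := by
        simp only [Prod.fst_add, Prod.snd_add, Prod.smul_fst, Prod.smul_snd, smul_eq_mul]
        linear_combination (-(Y ω)) * hab
      rw [harg]
      simpa [smul_eq_mul] using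
        (convexOn_rho' τ).2 (Set.mem_univ (Y ω - p.1 - p.2 * X ω))
          (Set.mem_univ (Y ω - q.1 - q.2 * X ω)) ha hb hab
    calc ∫ ω, rho τ (Y ω - (a • p + b • q).1 - (a • p + b • q).2 * X ω) ∂P
        ≤ ∫ ω, (a * rho τ (Y ω - p.1 - p.2 * X ω) + b * rho τ (Y ω - q.1 - q.2 * X ω)) ∂P :=
          integral_mono (intrho _) (((intrho p).const_mul a).add ((intrho q).const_mul b)) hpt
      _ = a • (∫ ω, rho τ (Y ω - p.1 - p.2 * X ω) ∂P) +
            b • (∫ ω, rho τ (Y ω - q.1 - q.2 * X ω) ∂P) := by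
          rw [integral_add ((intrho p).const_mul a) ((intrho q).const_mul b),
            integral_const_mul, integral_const_mul]
          simp [smul_eq_mul]
  refine ⟨hconv, ?_⟩
  -- marginal absolute continuity and separation
  have hacX : Measure.map X P ≪ (volume : Measure ℝ) := by
    refine Measure.AbsolutelyContinuous.mk fun A hA hvol => ?_
    rw [Measure.map_apply hX hA]
    have hpre : X ⁻¹' A = (fun ω => (X ω, Y ω)) ⁻¹' (A ×ˢ Set.univ) := by ext ω; simp
    rw [hpre, ← Measure.map_apply (hX.prodMk hY) (hA.prod MeasurableSet.univ)]
    apply hjoint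
    rw [Measure.volume_eq_prod, Measure.prod_prod, hvol, zero_mul]
  haveI : IsProbabilityMeasure (Measure.map X P) := Measure.isProbabilityMeasure_map hX.aemeasurable
  obtain ⟨c1, c2, h12, hm1, hm2⟩ := exists_sep (Measure.map X P) hacX
  rw [Measure.map_apply hX measurableSet_Iic] at hm1
  rw [Measure.map_apply hX measurableSet_Ici] at hm2
  set S1 : Set Ω := X ⁻¹' Set.Iic c1 with hS1
  set S2 : Set Ω := X ⁻¹' Set.Ici c2 with hS2
  set ε : ℝ := min ((P S1).toReal) ((P S2).toReal) with hε
  have hε0 : 0 < ε := by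
    apply lt_min
    · exact ENNReal.toReal_pos hm1.ne' (measure_ne_top P S1)
    · exact ENNReal.toReal_pos hm2.ne' (measure_ne_top P S2)
  set k : ℝ := (c2 - c1) / (c2 - c1 + 2 * max |c1| |c2| + 2) with hk
  have hk0 : 0 < k := by
    apply div_pos (by linarith)
    have : (0:ℝ) ≤ max |c1| |c2| := le_trans (abs_nonneg c1) (le_max_left _ _)
    linarith
  have intline : ∀ a b : ℝ, Integrable (fun ω => a + b * X ω) P := fun a b =>
    (integrable_const a).add (intX.const_mul b)
  -- key linear lower bound
  have hlin : ∀ a b : ℝ, ε * (k * (|a| + |b|)) ≤ ∫ ω, |a + b * X ω| ∂P := by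
    intro a b
    have hεM : ∀ (S : Set Ω), MeasurableSet S → ε ≤ (P S).toReal →
        ∀ r : ℝ, (∀ ω ∈ S, r ≤ |a + b * X ω|) → ε * r ≤ ∫ ω, |a + b * X ω| ∂P := by
      intro S hS hεS r hr
      rcases le_or_gt r 0 with hr0 | hr0
      · calc ε * r ≤ 0 := mul_nonpos_of_nonneg_of_nonpos hε0.le hr0
          _ ≤ ∫ ω, |a + b * X ω| ∂P := integral_nonneg fun ω => abs_nonneg _
      · calc ε * r ≤ (P S).toReal * r := mul_le_mul_of_nonneg_right hεS hr0.le
          _ ≤ ∫ ω, |a + b * X ω| ∂P := set_lb' P _ (intline a b) S hS r hr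
    rcases le_or_gt 0 b with hb | hb
    · have hcr := coerc_real' a b c1 c2 hb h12
      rw [← hk] at hcr
      -- max over which term achieves
      rcases le_total (max 0 (-(a + b * c1))) (max 0 (a + b * c2)) with hmx | hmx
      · rw [max_eq_right hmx] at hcr
        have := hεM S2 (hX measurableSet_Ici) (min_le_right _ _) (max 0 (a + b * c2))
          (fun ω hω => by
            have hXω : c2 ≤ X ω := hω
            have : a + b * c2 ≤ a + b * X ω := by nlinarith
            exact max_le (abs_nonneg _) (le_trans this (le_abs_self _)))
        exact le_trans (mul_le_mul_of_nonneg_left hcr hε0.le) this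
      · rw [max_eq_left hmx] at hcr
        have := hεM S1 (hX measurableSet_Iic) (min_le_left _ _) (max 0 (-(a + b * c1)))
          (fun ω hω => by
            have hXω : X ω ≤ c1 := hω
            have : a + b * X ω ≤ a + b * c1 := by nlinarith
            exact max_le (abs_nonneg _) (le_trans (neg_le_neg this) (neg_le_abs _)))
        exact le_trans (mul_le_mul_of_nonneg_left hcr hε0.le) this
    · have hcr := coerc_real' a (-b) (-c2) (-c1) (by linarith) (by linarith)
      have heq : (-c1 - -c2) / (-c1 - -c2 + 2 * max |(-c2)| |(-c1)| + 2) = k := by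
        rw [hk, abs_neg, abs_neg, max_comm]
        ring_nf
      rw [heq, abs_neg] at hcr
      rcases le_total (max 0 (-(a + -b * -c2))) (max 0 (a + -b * -c1)) with hmx | hmx
      · rw [max_eq_right hmx] at hcr
        have := hεM S1 (hX measurableSet_Iic) (min_le_left _ _) (max 0 (a + -b * -c1))
          (fun ω hω => by
            have hXω : X ω ≤ c1 := hω
            have : a + b * c1 ≤ a + b * X ω := by nlinarith
            have h2 : a + -b * -c1 ≤ a + b * X ω := by linarith [this]
            exact max_le (abs_nonneg _) (le_trans h2 (le_abs_self _)))
        exact le_trans (mul_le_mul_of_nonneg_left hcr hε0.le) this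
      · rw [max_eq_left hmx] at hcr
        have := hεM S2 (hX measurableSet_Ici) (min_le_right _ _) (max 0 (-(a + -b * -c2)))
          (fun ω hω => by
            have hXω : c2 ≤ X ω := hω
            have h1 : a + b * X ω ≤ a + b * c2 := by nlinarith
            have h2 : -(a + -b * -c2) ≤ -(a + b * X ω) := by linarith
            exact max_le (abs_nonneg _) (le_trans h2 (neg_le_abs _)))
        exact le_trans (mul_le_mul_of_nonneg_left hcr hε0.le) this
  -- global lower bound for h
  set cm : ℝ := min τ (1 - τ) with hcm
  have hcm0 : 0 < cm := lt_min hτ0 (by linarith)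
  set CY : ℝ := ∫ ω, |Y ω| ∂P with hCY
  have hlower : ∀ p : ℝ × ℝ,
      cm * (ε * (k * (|p.1| + |p.2|)) - CY) ≤ ∫ ω, rho τ (Y ω - p.1 - p.2 * X ω) ∂P := by
    intro p
    have step1 : cm * (∫ ω, |Y ω - p.1 - p.2 * X ω| ∂P) ≤
        ∫ ω, rho τ (Y ω - p.1 - p.2 * X ω) ∂P := by
      rw [← integral_const_mul]
      exact integral_mono ((intf p).abs.const_mul cm) (intrho p)
        (fun ω => rho_ge' τ _ ⟨hτ0, hτ1⟩)
    have step2 : ∫ ω, |p.1 + p.2 * X ω| ∂P ≤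
        (∫ ω, |Y ω - p.1 - p.2 * X ω| ∂P) + CY := by
      rw [hCY, ← integral_add (intf p).abs hY1.abs]
      refine integral_mono (intline p.1 p.2).abs ((intf p).abs.add hY1.abs) fun ω => ?_
      calc |p.1 + p.2 * X ω| = |(Y ω - p.1 - p.2 * X ω) - Y ω| := by
            rw [show (Y ω - p.1 - p.2 * X ω) - Y ω = -(p.1 + p.2 * X ω) by ring, abs_neg]
        _ ≤ |Y ω - p.1 - p.2 * X ω| + |Y ω| := abs_sub _ _
    have step3 := hlin p.1 p.2
    have : ε * (k * (|p.1| + |p.2|)) - CY ≤ ∫ ω, |Y ω - p.1 - p.2 * X ω| ∂P := by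
      linarith
    calc cm * (ε * (k * (|p.1| + |p.2|)) - CY)
        ≤ cm * (∫ ω, |Y ω - p.1 - p.2 * X ω| ∂P) := mul_le_mul_of_nonneg_left this hcm0.le
      _ ≤ _ := step1
  -- coercivity of |a| + |b| along the comap filter
  have hnorm : Tendsto (fun p : ℝ × ℝ => |p.1| + |p.2|)
      (Filter.comap (fun p : ℝ × ℝ => p.1 ^ 2 + p.2 ^ 2) atTop) atTop := by
    rw [tendsto_atTop]
    intro R
    have hcomap : Tendsto (fun p : ℝ × ℝ => p.1 ^ 2 + p.2 ^ 2)
        (Filter.comap (fun p : ℝ × ℝ => p.1 ^ 2 + p.2 ^ 2) atTop) atTop := tendsto_comap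
    filter_upwards [hcomap.eventually (eventually_ge_atTop ((max R 0) ^ 2))] with p hp
    have h1 : (max R 0) ^ 2 ≤ (|p.1| + |p.2|) ^ 2 := by
      nlinarith [abs_nonneg p.1, abs_nonneg p.2, sq_abs p.1, sq_abs p.2,
        mul_nonneg (abs_nonneg p.1) (abs_nonneg p.2)]
    have h2 : max R 0 ≤ |p.1| + |p.2| :=
      le_of_pow_le_pow_left₀ two_ne_zero (by positivity) h1
    exact le_trans (le_max_left R 0) h2
  -- final: lower bound tends to infinity
  have hbnd : Tendsto (fun p : ℝ × ℝ => cm * (ε * (k * (|p.1| + |p.2|)) - CY))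
      (Filter.comap (fun p : ℝ × ℝ => p.1 ^ 2 + p.2 ^ 2) atTop) atTop := by
    have hfun : (fun t : ℝ => cm * (ε * (k * t) - CY)) =
        fun t : ℝ => (cm * ε * k) * t + (-(cm * CY)) := by funext t; ring
    have hg : Tendsto (fun t : ℝ => cm * (ε * (k * t) - CY)) atTop atTop := by
      rw [hfun]
      exact tendsto_atTop_add_const_right _ _
        (tendsto_id.const_mul_atTop (by positivity))
    exact hg.comp hnorm
  exact tendsto_atTop_mono hlower hbnd
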